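/- arXiv:1808.02843 — 7 statements merged into one kernel-verified Lean document; each statement's English description precedes it below -/
import Mathlib

section
/- The ℓ¹ norm φ(x) = Σₙ |xₙ| on ℓ¹(ℝ) is Gâteaux differentiable at x if and only if xₙ ≠ 0 for all n, and in that case the Gâteaux derivative is given by dφ(x)(h) = Σₙ sign(xₙ)·hₙ. -/
open Filter Topology

private lemma abs_summable (y : lp (fun _ : ℕ => ℝ) 1) : Summable fun n => |y n| := by
  have := (lp.memℓp y).summable (p := 1) (by norm_num)
  simpa [Real.norm_eq_abs] using this

private lemma abs_sign_le (a : ℝ) : |Real.sign a| ≤ 1 := by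
  rcases Real.sign_apply_eq a with h | h | h <;> rw [h] <;> norm_num

private lemma sign_summable (x y : lp (fun _ : ℕ => ℝ) 1) :
    Summable fun n => Real.sign (x n) * y n := by
  apply Summable.of_norm_bounded (abs_summable y)
  intro n
  rw [Real.norm_eq_abs, abs_mul]
  calc |Real.sign (x n)| * |y n| ≤ 1 * |y n| :=
        mul_le_mul_of_nonneg_right (abs_sign_le _) (abs_nonneg _)
    _ = |y n| := one_mul _

private lemma lp_norm_eq (y : lp (fun _ : ℕ => ℝ) 1) : ‖y‖ = ∑' n, |y n| := by
  rw [lp.norm_eq_tsum_rpow (by norm_num) y]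
  simp [Real.norm_eq_abs]

/-- The candidate derivative as a continuous linear functional. -/
noncomputable def signFunctional (x : lp (fun _ : ℕ => ℝ) 1) :
    lp (fun _ : ℕ => ℝ) 1 →L[ℝ] ℝ :=
  LinearMap.mkContinuous
    { toFun := fun h => ∑' n, Real.sign (x n) * h n
      map_add' := by
        intro h g
        dsimp only
        have : ∀ n, Real.sign (x n) * (h + g) n
            = Real.sign (x n) * h n + Real.sign (x n) * g n := by
          intro n
          rw [lp.coeFn_add, Pi.add_apply, mul_add]
        rw [tsum_congr this, Summable.tsum_add (sign_summable x h) (sign_summable x g)]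
      map_smul' := by
        intro c h
        dsimp only [RingHom.id_apply, smul_eq_mul]
        have : ∀ n, Real.sign (x n) * (c • h) n = c * (Real.sign (x n) * h n) := by
          intro n
          rw [lp.coeFn_smul, Pi.smul_apply, smul_eq_mul]; ring
        rw [tsum_congr this, tsum_mul_left] }
    1
    (by
      intro h
      simp only [LinearMap.coe_mk, AddHom.coe_mk, one_mul]
      rw [lp_norm_eq h, Real.norm_eq_abs, ← Real.norm_eq_abs]
      refine le_trans (norm_tsum_le_tsum_norm ?_) (Summable.tsum_le_tsum ?_ ?_ (abs_summable h))
      · apply Summable.of_nonneg_of_le (fun n => norm_nonneg _)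
          (fun n => ?_) (abs_summable h)
        rw [Real.norm_eq_abs, abs_mul]
        calc |Real.sign (x n)| * |h n| ≤ 1 * |h n| :=
              mul_le_mul_of_nonneg_right (abs_sign_le _) (abs_nonneg _)
          _ = |h n| := one_mul _
      · intro n
        rw [Real.norm_eq_abs, abs_mul]
        calc |Real.sign (x n)| * |h n| ≤ 1 * |h n| :=
              mul_le_mul_of_nonneg_right (abs_sign_le _) (abs_nonneg _)
          _ = |h n| := one_mul _
      · apply Summable.of_nonneg_of_le (fun n => norm_nonneg _) (fun n => ?_)
          (abs_summable h)
        rw [Real.norm_eq_abs, abs_mul]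
        calc |Real.sign (x n)| * |h n| ≤ 1 * |h n| :=
              mul_le_mul_of_nonneg_right (abs_sign_le _) (abs_nonneg _)
          _ = |h n| := one_mul _)

/-- Pointwise difference quotient limit for a single coordinate, `a ≠ 0`. -/
private lemma ptwise {a b : ℝ} (ha : a ≠ 0) :
    Tendsto (fun t : ℝ => (|a + t * b| - |a|) / t) (𝓝[≠] (0 : ℝ))
      (𝓝 (Real.sign a * b)) := by
  have hsmall : ∀ᶠ t in 𝓝 (0 : ℝ), |t| * |b| < |a| := by
    have hcont : Tendsto (fun t : ℝ => |t| * |b|) (𝓝 0) (𝓝 (|(0:ℝ)| * |b|)) :=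
      ((continuous_abs.mul continuous_const).tendsto 0)
    simp only [abs_zero, zero_mul] at hcont
    exact hcont.eventually (Filter.Tendsto.eventually_lt_const (abs_pos.mpr ha) tendsto_id)
  have heq : ∀ᶠ t in 𝓝[≠] (0 : ℝ),
      (|a + t * b| - |a|) / t = Real.sign a * b := by
    filter_upwards [eventually_nhdsWithin_of_eventually_nhds hsmall,
      self_mem_nhdsWithin] with t hlt (ht : t ≠ 0)
    have htb : |t * b| < |a| := by rwa [abs_mul]
    rcases ha.lt_or_gt with hneg | hpos
    · have h1 : a + t * b < 0 := by
        have := (abs_lt.mp htb).2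
        rw [abs_of_neg hneg] at this
        linarith
      rw [abs_of_neg h1, abs_of_neg hneg, Real.sign_of_neg hneg]
      field_simp
      ring
    · have h1 : 0 < a + t * b := by
        have := (abs_lt.mp htb).2
        rw [abs_of_pos hpos] at this
        nlinarith [(abs_lt.mp htb).1, abs_of_pos hpos]
      rw [abs_of_pos h1, abs_of_pos hpos, Real.sign_of_pos hpos]
      field_simp
      ring
  exact tendsto_const_nhds.congr' (heq.mono fun t ht => ht.symm)

/-- The key limit when all coordinates are nonzero. -/
private lemma key_limit (x : lp (fun _ : ℕ => ℝ) 1) (hx : ∀ n : ℕ, x n ≠ 0)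
    (h : lp (fun _ : ℕ => ℝ) 1) :
    Tendsto (fun t : ℝ => ((∑' n, |(x + t • h) n|) - ∑' n, |x n|) / t)
      (𝓝[≠] (0 : ℝ)) (𝓝 (∑' n, Real.sign (x n) * h n)) := by
  have hdom : Tendsto (fun t : ℝ => ∑' n, (|x n + t * h n| - |x n|) / t)
      (𝓝[≠] (0 : ℝ)) (𝓝 (∑' n, Real.sign (x n) * h n)) := by
    apply tendsto_tsum_of_dominated_convergence (bound := fun n => |h n|) (abs_summable h)
    · intro n
      exact ptwise (hx n)
    · apply Eventually.of_forall
      intro t n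
      rcases eq_or_ne t 0 with rfl | ht
      · simp
      · rw [Real.norm_eq_abs, abs_div]
        rw [div_le_iff₀ (abs_pos.mpr ht)]
        have hb : |(|x n + t * h n| - |x n|)| ≤ |t * h n| := by
          simpa using abs_abs_sub_abs_le_abs_sub (x n + t * h n) (x n)
        refine hb.trans (le_of_eq ?_)
        rw [abs_mul]; ring
  apply hdom.congr
  intro t
  have hco : ∀ n : ℕ, |(x + t • h) n| = |x n + t * h n| := by
    intro n
    rw [lp.coeFn_add, lp.coeFn_smul, Pi.add_apply, Pi.smul_apply, smul_eq_mul]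
  have hsum1 : Summable fun n => |(x + t • h) n| := abs_summable _
  calc ∑' n, (|x n + t * h n| - |x n|) / t
      = ∑' n, (|(x + t • h) n| - |x n|) / t := by
        refine tsum_congr fun n => ?_; rw [hco n]
    _ = (∑' n, (|(x + t • h) n| - |x n|)) / t := tsum_div_const
    _ = ((∑' n, |(x + t • h) n|) - ∑' n, |x n|) / t := by
        rw [Summable.tsum_sub hsum1 (abs_summable x)]

/-- Gâteaux differentiability of `φ` at `x` with (continuous linear) derivative `u`. -/
def IsGateauxDerivAt {X : Type*} [NormedAddCommGroup X] [NormedSpace ℝ X]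
    (φ : X → ℝ) (u : X →L[ℝ] ℝ) (x : X) : Prop :=
  ∀ h : X, Tendsto (fun t : ℝ => (φ (x + t • h) - φ x) / t) (𝓝[≠] (0 : ℝ)) (𝓝 (u h))

private lemma no_deriv (x : lp (fun _ : ℕ => ℝ) 1) (u : lp (fun _ : ℕ => ℝ) 1 →L[ℝ] ℝ)
    (hu : IsGateauxDerivAt (fun y : lp (fun _ : ℕ => ℝ) 1 => ∑' n, |y n|) u x)
    (n0 : ℕ) (h0 : x n0 = 0) : False := by
  set e := lp.single (E := fun _ : ℕ => ℝ) 1 n0 (1 : ℝ) with he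
  have hcoe : ∀ t : ℝ, ∀ k, (x + t • e) k = x k + t * e k := by
    intro t k
    rw [lp.coeFn_add, lp.coeFn_smul, Pi.add_apply, Pi.smul_apply, smul_eq_mul]
  have hval : ∀ t : ℝ, (∑' k, |(x + t • e) k|) - ∑' k, |x k| = |t| := by
    intro t
    rw [← Summable.tsum_sub (abs_summable _) (abs_summable x)]
    rw [tsum_eq_single n0 ?_]
    · rw [hcoe t n0, lp.single_apply_self, h0]
      simp
    · intro k hk
      rw [hcoe t k, lp.single_apply_ne 1 n0 _ hk]
      simp
  have htend : Tendsto (fun t : ℝ => |t| / t) (𝓝[≠] (0 : ℝ)) (𝓝 (u e)) := by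
    apply (hu e).congr
    intro t
    show ((∑' k, |(x + t • e) k|) - ∑' k, |x k|) / t = |t| / t
    rw [hval t]
  have hp : Tendsto (fun t : ℝ => |t| / t) (𝓝[>] (0 : ℝ)) (𝓝 (u e)) :=
    htend.mono_left (nhdsWithin_mono 0 fun t ht => ne_of_gt ht)
  have hp1 : Tendsto (fun t : ℝ => |t| / t) (𝓝[>] (0 : ℝ)) (𝓝 1) := by
    apply tendsto_const_nhds.congr'
    filter_upwards [self_mem_nhdsWithin] with t (ht : t ∈ Set.Ioi 0)
    rw [abs_of_pos ht, div_self (ne_of_gt ht)]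
  have hm : Tendsto (fun t : ℝ => |t| / t) (𝓝[<] (0 : ℝ)) (𝓝 (u e)) :=
    htend.mono_left (nhdsWithin_mono 0 fun t ht => ne_of_lt ht)
  have hm1 : Tendsto (fun t : ℝ => |t| / t) (𝓝[<] (0 : ℝ)) (𝓝 (-1)) := by
    apply tendsto_const_nhds.congr'
    filter_upwards [self_mem_nhdsWithin] with t (ht : t ∈ Set.Iio 0)
    rw [abs_of_neg ht, neg_div, div_self (ne_of_lt ht)]
  have e1 : u e = 1 := tendsto_nhds_unique hp hp1
  have e2 : u e = -1 := tendsto_nhds_unique hm hm1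
  rw [e1] at e2
  norm_num at e2

/-- The ℓ¹ norm `φ x = ∑ₙ |xₙ|` is Gâteaux differentiable at `x` iff `xₙ ≠ 0` for all `n`,
and in that case the Gâteaux derivative is `h ↦ ∑ₙ sign (xₙ) * hₙ`. -/
theorem l1_norm_gateaux (x : lp (fun _ : ℕ => ℝ) 1) :
    ((∃ u : lp (fun _ : ℕ => ℝ) 1 →L[ℝ] ℝ,
        IsGateauxDerivAt (fun y : lp (fun _ : ℕ => ℝ) 1 => ∑' n, |y n|) u x)
      ↔ ∀ n : ℕ, x n ≠ 0) ∧
    (∀ u : lp (fun _ : ℕ => ℝ) 1 →L[ℝ] ℝ,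
      IsGateauxDerivAt (fun y : lp (fun _ : ℕ => ℝ) 1 => ∑' n, |y n|) u x →
      ∀ h : lp (fun _ : ℕ => ℝ) 1, u h = ∑' n, Real.sign (x n) * h n) := by
  have fwd : (∃ u : lp (fun _ : ℕ => ℝ) 1 →L[ℝ] ℝ,
      IsGateauxDerivAt (fun y : lp (fun _ : ℕ => ℝ) 1 => ∑' n, |y n|) u x) →
      ∀ n : ℕ, x n ≠ 0 := by
    rintro ⟨u, hu⟩ n hn
    exact no_deriv x u hu n hn
  constructor
  · constructor
    · exact fwd
    · intro hx
      refine ⟨signFunctional x, fun h => ?_⟩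
      exact key_limit x hx h
  · intro u hu h
    have hx := fwd ⟨u, hu⟩
    exact tendsto_nhds_unique (hu h) (key_limit x hx h)
end

section
/- Let T be a compact Hausdorff space. The sup-norm φ(x) = sup_{t∈T} |x(t)| on C(T) is Gâteaux differentiable at x ≠ 0 if and only if |x| attains its supremum at exactly one point t₀ ∈ T; in that case the Gâteaux derivative is h ↦ sign(x(t₀))·h(t₀). -/
open Filter Topology

section Aux

variable {T : Type*} [TopologicalSpace T] [CompactSpace T] [T2Space T]

private lemma sign_cases' {a : ℝ} (ha : a ≠ 0) : Real.sign a = 1 ∨ Real.sign a = -1 :=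
  (Real.sign_apply_eq_of_ne_zero a ha).symm

private lemma sign_mul_eq_abs {a : ℝ} (ha : a ≠ 0) : Real.sign a * a = |a| := by
  rcases lt_or_gt_of_ne ha with h | h
  · rw [Real.sign_of_neg h, abs_of_neg h]; ring
  · rw [Real.sign_of_pos h, abs_of_pos h]; ring

private lemma sign_mul_le_abs {a : ℝ} (ha : a ≠ 0) (b : ℝ) : Real.sign a * b ≤ |b| := by
  rcases sign_cases' ha with h | h <;> rw [h]
  · rw [one_mul]; exact le_abs_self b
  · rw [neg_one_mul]; exact neg_le_abs b

private lemma abs_eq_sign_mul {s a : ℝ} (hs : s = 1 ∨ s = -1) (ha : 0 < s * a) :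
    |a| = s * a := by
  rcases hs with h | h <;> subst h
  · rw [one_mul] at *; exact abs_of_pos ha
  · rw [neg_one_mul] at *
    rw [abs_of_neg (by linarith : a < 0)]

private lemma abs_apply_le_norm (y : C(T, ℝ)) (σ : T) : |y σ| ≤ ‖y‖ := by
  rw [← Real.norm_eq_abs]; exact y.norm_coe_le_norm σ

private lemma exists_norm_attained [Nonempty T] (y : C(T, ℝ)) :
    ∃ τ, (∀ σ, |y σ| ≤ |y τ|) ∧ ‖y‖ = |y τ| := by
  obtain ⟨τ, -, hτ⟩ := isCompact_univ.exists_isMaxOn Set.univ_nonempty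
    ((map_continuous y).abs.continuousOn)
  have hmax : ∀ σ, |y σ| ≤ |y τ| := fun σ => hτ (Set.mem_univ σ)
  refine ⟨τ, hmax, le_antisymm ?_ (abs_apply_le_norm y τ)⟩
  exact (y.norm_le (abs_nonneg _)).2 fun σ => by rw [Real.norm_eq_abs]; exact hmax σ

private lemma norm_lower (x h : C(T, ℝ)) {τ : T} (hτ : |x τ| = ‖x‖) (hxτ : x τ ≠ 0) (t : ℝ) :
    ‖x‖ + t * (Real.sign (x τ) * h τ) ≤ ‖x + t • h‖ := by
  have h1 : Real.sign (x τ) * ((x + t • h) τ) ≤ |(x + t • h) τ| := sign_mul_le_abs hxτ _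
  have h2 : |(x + t • h) τ| ≤ ‖x + t • h‖ := abs_apply_le_norm _ τ
  have happ : (x + t • h) τ = x τ + t * h τ := by simp
  have h3 : Real.sign (x τ) * x τ = ‖x‖ := by rw [sign_mul_eq_abs hxτ, hτ]
  rw [happ] at h1 h2
  have h4 : Real.sign (x τ) * (x τ + t * h τ)
      = Real.sign (x τ) * x τ + t * (Real.sign (x τ) * h τ) := by ring
  linarith

private lemma key_tendsto (x : C(T, ℝ)) (hx : x ≠ 0) {t₀ : T} (ht₀ : |x t₀| = ‖x‖)
    (huniq : ∀ t : T, |x t| = ‖x‖ → t = t₀) (h : C(T, ℝ)) :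
    Tendsto (fun t : ℝ => (‖x + t • h‖ - ‖x‖) / t) (𝓝[≠] (0 : ℝ))
      (𝓝 (Real.sign (x t₀) * h t₀)) := by
  have : Nonempty T := ⟨t₀⟩
  have hnx : 0 < ‖x‖ := norm_pos_iff.mpr hx
  have hx0 : x t₀ ≠ 0 := by
    intro e; rw [e, abs_zero] at ht₀; linarith
  set s : ℝ := Real.sign (x t₀) with hs
  have hscases : s = 1 ∨ s = -1 := sign_cases' hx0
  have hsabs : ∀ b : ℝ, s * b ≤ |b| := sign_mul_le_abs hx0
  have hsx : s * x t₀ = ‖x‖ := by rw [hs, sign_mul_eq_abs hx0, ht₀]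
  have hhb : ∀ σ : T, |h σ| ≤ ‖h‖ := abs_apply_le_norm h
  rw [Metric.tendsto_nhds]
  intro ε hε
  -- the good neighborhood of t₀
  set U : Set T := {τ | |h τ - h t₀| < ε} ∩ {τ | ‖x‖ / 2 < s * x τ} with hU
  have hUopen : IsOpen U := by
    apply IsOpen.inter
    · exact isOpen_lt (((map_continuous h).sub continuous_const).abs) continuous_const
    · exact isOpen_lt continuous_const (continuous_const.mul (map_continuous x))
  have ht₀U : t₀ ∈ U := ⟨by simp [hε], by rw [Set.mem_setOf_eq, hsx]; linarith⟩
  -- uniform gap outside U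
  obtain ⟨δ, hδ, hKb⟩ : ∃ δ > 0, ∀ τ : T, τ ∉ U → |x τ| ≤ ‖x‖ - δ := by
    by_cases hK : ∃ τ : T, τ ∉ U
    · obtain ⟨τ₁, hτ₁, hmax⟩ := (hUopen.isClosed_compl.isCompact).exists_isMaxOn hK
        ((map_continuous x).abs.continuousOn)
    -- |x τ₁| < ‖x‖
      have hlt : |x τ₁| < ‖x‖ := by
        rcases lt_or_eq_of_le (abs_apply_le_norm x τ₁) with hl | he
        · exact hl
        · exact absurd (huniq τ₁ he ▸ ht₀U) hτ₁
      refine ⟨‖x‖ - |x τ₁|, by linarith, fun τ hτ => ?_⟩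
      have h5 : |x τ| ≤ |x τ₁| := hmax hτ
      linarith
    · exact ⟨‖x‖, hnx, fun τ hτ => absurd ⟨τ, hτ⟩ hK⟩
  set r : ℝ := min (δ / (2 * (‖h‖ + 1))) (‖x‖ / (2 * (‖h‖ + 1))) with hrdef
  have hhpos : 0 < ‖h‖ + 1 := by positivity
  have hrpos : 0 < r := lt_min (by positivity) (by positivity)
  have hmem : ∀ᶠ t in 𝓝[≠] (0 : ℝ), |t| < r := by
    have h1 : ∀ᶠ t in 𝓝 (0 : ℝ), |t| < r := by
      have := Metric.ball_mem_nhds (0 : ℝ) hrpos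
      filter_upwards [this] with t ht
      simpa [Real.dist_eq] using ht
    exact h1.filter_mono nhdsWithin_le_nhds
  filter_upwards [hmem, self_mem_nhdsWithin] with t htr htne
  have htne' : t ≠ 0 := htne
  have htabs : 0 < |t| := abs_pos.mpr htne'
  have htδ : |t| * ‖h‖ < δ / 2 := by
    have h1 : |t| < δ / (2 * (‖h‖ + 1)) := lt_of_lt_of_le htr (min_le_left _ _)
    rw [lt_div_iff₀ (by positivity : (0:ℝ) < 2 * (‖h‖ + 1))] at h1
    nlinarith [abs_nonneg t]
  have htx : |t| * ‖h‖ < ‖x‖ / 2 := by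
    have h1 : |t| < ‖x‖ / (2 * (‖h‖ + 1)) := lt_of_lt_of_le htr (min_le_right _ _)
    rw [lt_div_iff₀ (by positivity : (0:ℝ) < 2 * (‖h‖ + 1))] at h1
    nlinarith [abs_nonneg t]
  -- pick a maximizer of |x + t h|
  obtain ⟨τ, hmax, hnorm⟩ := exists_norm_attained (x + t • h)
  have happ : ∀ σ : T, (x + t • h) σ = x σ + t * h σ := fun σ => by simp
  have hτU : τ ∈ U := by
    by_contra hτU
    have h1 : |x τ + t * h τ| ≤ |x τ| + |t| * |h τ| := by
      calc |x τ + t * h τ| ≤ |x τ| + |t * h τ| := abs_add_le _ _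
        _ = |x τ| + |t| * |h τ| := by rw [abs_mul]
    have h2 : |x τ| ≤ ‖x‖ - δ := hKb τ hτU
    have h3 : ‖x‖ - |t| * ‖h‖ ≤ |x t₀ + t * h t₀| := by
      have h7 := abs_sub_abs_le_abs_sub (x t₀) (-(t * h t₀))
      rw [sub_neg_eq_add, abs_neg, ht₀] at h7
      have h4 : |t * h t₀| ≤ |t| * ‖h‖ := by
        rw [abs_mul]
        exact mul_le_mul_of_nonneg_left (hhb t₀) (abs_nonneg t)
      linarith
    have h5 := hmax t₀
    rw [happ, happ] at h5
    have h6 : |t| * |h τ| ≤ |t| * ‖h‖ :=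
      mul_le_mul_of_nonneg_left (hhb τ) (abs_nonneg t)
    linarith
  obtain ⟨hhτ, hxτ⟩ := hτU
  rw [Set.mem_setOf_eq] at hhτ hxτ
  -- positivity of s * ((x + t h) τ)
  have hsth : -( ‖x‖ / 2) < s * (t * h τ) := by
    have h1 : -(|t| * ‖h‖) ≤ s * (t * h τ) := by
      have h2 : s * (-(t * h τ)) ≤ |t * h τ| := by
        have := hsabs (-(t * h τ)); rwa [abs_neg] at this
      have h3 : |t * h τ| ≤ |t| * ‖h‖ := by
        rw [abs_mul]; exact mul_le_mul_of_nonneg_left (hhb τ) (abs_nonneg t)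
      nlinarith
    linarith
  have hpos : 0 < s * (x τ + t * h τ) := by
    rw [mul_add]; linarith
  have habs : |x τ + t * h τ| = s * (x τ + t * h τ) := abs_eq_sign_mul hscases hpos
  have hnormval : ‖x + t • h‖ = s * x τ + t * (s * h τ) := by
    rw [hnorm, happ, habs]; ring
  -- upper estimate: N - ‖x‖ ≤ t * (s * h τ)
  have hup : ‖x + t • h‖ - ‖x‖ ≤ t * (s * h τ) := by
    have h1 : s * x τ ≤ |x τ| := hsabs _
    have h2 : |x τ| ≤ ‖x‖ := abs_apply_le_norm x τ
    rw [hnormval]; linarith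
  -- lower estimate: t * (s * h t₀) ≤ N - ‖x‖
  have hlow : t * (s * h t₀) ≤ ‖x + t • h‖ - ‖x‖ := by
    have := norm_lower x h ht₀ hx0 t
    rw [← hs] at this
    linarith
  -- |s h τ - s h t₀| < ε
  have hclose : |s * h τ - s * h t₀| < ε := by
    have : s * h τ - s * h t₀ = s * (h τ - h t₀) := by ring
    rw [this]
    rcases hscases with h1 | h1 <;> rw [h1]
    · rwa [one_mul]
    · rwa [neg_one_mul, abs_neg]
  rw [Real.dist_eq, abs_lt]
  have hc1 : s * h τ - s * h t₀ < ε := (abs_lt.mp hclose).2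
  have hc2 : -ε < s * h τ - s * h t₀ := (abs_lt.mp hclose).1
  rcases lt_or_gt_of_ne htne' with ht | ht
  · -- t < 0
    have hq1 : s * h τ ≤ (‖x + t • h‖ - ‖x‖) / t := by
      rw [le_div_iff_of_neg ht]; linarith [hup]
    have hq2 : (‖x + t • h‖ - ‖x‖) / t ≤ s * h t₀ := by
      rw [div_le_iff_of_neg ht]; linarith [hlow]
    constructor <;> linarith
  · -- t > 0
    have hq1 : (‖x + t • h‖ - ‖x‖) / t ≤ s * h τ := by
      rw [div_le_iff₀ ht]; linarith [hup]
    have hq2 : s * h t₀ ≤ (‖x + t • h‖ - ‖x‖) / t := by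
      rw [le_div_iff₀ ht]; linarith [hlow]
    constructor <;> linarith

/-- Evaluation at a point as a continuous linear functional on `C(T, ℝ)`. -/
private noncomputable def evalCLM' (t₀ : T) : C(T, ℝ) →L[ℝ] ℝ :=
  LinearMap.mkContinuous
    { toFun := fun h => h t₀
      map_add' := fun f g => by simp
      map_smul' := fun c f => by simp } 1
    (fun f => by rw [one_mul]; exact f.norm_coe_le_norm t₀)

end Aux

/-- For `T` compact Hausdorff, the sup-norm on `C(T, ℝ)` is Gâteaux differentiable at `x ≠ 0`
iff `|x|` attains its supremum at exactly one point `t₀`, in which case the derivative is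
`h ↦ sign (x t₀) * h t₀`. -/
theorem supnorm_gateaux_iff_unique_max {T : Type*} [TopologicalSpace T] [CompactSpace T]
    [T2Space T] (x : C(T, ℝ)) (hx : x ≠ 0) :
    ((∃ u : C(T, ℝ) →L[ℝ] ℝ, IsGateauxDerivAt (fun y : C(T, ℝ) => ‖y‖) u x)
      ↔ ∃! t₀ : T, |x t₀| = ‖x‖) ∧
    (∀ t₀ : T, |x t₀| = ‖x‖ → (∀ t : T, |x t| = ‖x‖ → t = t₀) →
      ∀ u : C(T, ℝ) →L[ℝ] ℝ, IsGateauxDerivAt (fun y : C(T, ℝ) => ‖y‖) u x →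
        ∀ h : C(T, ℝ), u h = Real.sign (x t₀) * h t₀) := by
  have hT : Nonempty T := by
    by_contra hT
    rw [not_nonempty_iff] at hT
    exact hx (ContinuousMap.ext fun t => (IsEmpty.false t).elim)
  have hnx : 0 < ‖x‖ := norm_pos_iff.mpr hx
  have hne0 : ∀ τ : T, |x τ| = ‖x‖ → x τ ≠ 0 := by
    intro τ hτ e; rw [e, abs_zero] at hτ; linarith
  constructor
  · constructor
    · rintro ⟨u, hu⟩
      obtain ⟨τ₀, hmax, hnorm⟩ := exists_norm_attained x
      refine ⟨τ₀, hnorm.symm, ?_⟩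
      intro t₁ ht₁
      by_contra hne
      -- two distinct maximum points t₁ ≠ τ₀; build a Urysohn separating function
      obtain ⟨f, hf0, hf1, -⟩ := exists_continuous_zero_one_of_isClosed
        (isClosed_singleton (x := τ₀)) (isClosed_singleton (x := t₁))
        (by rwa [Set.disjoint_singleton, ne_comm])
      set s₁ : ℝ := Real.sign (x t₁) with hs₁
      set h : C(T, ℝ) := s₁ • f with hh
      have hht₁ : h t₁ = s₁ := by
        simp [hh, hf1 (Set.mem_singleton t₁)]
      have hhτ₀ : h τ₀ = 0 := by
        simp [hh, hf0 (Set.mem_singleton τ₀)]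
      have hx₁ : x t₁ ≠ 0 := hne0 t₁ ht₁
      have hxτ₀ : x τ₀ ≠ 0 := hne0 τ₀ hnorm.symm
      have hss : s₁ * s₁ = 1 := by
        rcases sign_cases' hx₁ with h1 | h1 <;> rw [hs₁, h1] <;> norm_num
      -- for t > 0 the quotient is ≥ 1
      have hright : ∀ t : ℝ, 0 < t → 1 ≤ (‖x + t • h‖ - ‖x‖) / t := by
        intro t ht
        have := norm_lower x h ht₁ hx₁ t
        rw [hht₁, ← hs₁, hss] at this
        rw [le_div_iff₀ ht]; linarith
      -- for t < 0 the quotient is ≤ 0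
      have hleft : ∀ t : ℝ, t < 0 → (‖x + t • h‖ - ‖x‖) / t ≤ 0 := by
        intro t ht
        have := norm_lower x h hnorm.symm hxτ₀ t
        rw [hhτ₀, mul_zero, mul_zero, add_zero] at this
        rw [div_nonpos_iff]
        left; exact ⟨by linarith, ht.le⟩
      have hR : Tendsto (fun t : ℝ => (‖x + t • h‖ - ‖x‖) / t) (𝓝[>] (0 : ℝ)) (𝓝 (u h)) :=
        (hu h).mono_left (nhdsWithin_mono 0 fun t ht => ne_of_gt ht)
      have hL : Tendsto (fun t : ℝ => (‖x + t • h‖ - ‖x‖) / t) (𝓝[<] (0 : ℝ)) (𝓝 (u h)) :=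
        (hu h).mono_left (nhdsWithin_mono 0 fun t ht => ne_of_lt ht)
      have h1 : 1 ≤ u h :=
        ge_of_tendsto hR (eventually_nhdsWithin_of_forall fun t ht => hright t ht)
      have h2 : u h ≤ 0 :=
        le_of_tendsto hL (eventually_nhdsWithin_of_forall fun t ht => hleft t ht)
      linarith
    · rintro ⟨t₀, ht₀, huniq⟩
      refine ⟨Real.sign (x t₀) • evalCLM' t₀, ?_⟩
      intro h
      have hval : (Real.sign (x t₀) • evalCLM' t₀) h = Real.sign (x t₀) * h t₀ := rfl
      rw [hval]
      exact key_tendsto x hx ht₀ huniq h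
  · intro t₀ ht₀ huniq u hu h
    exact tendsto_nhds_unique (hu h) (key_tendsto x hx ht₀ huniq h)
end

section
/- Let x ∈ ℓ∞(ℝ) be a bounded sequence for which there exist p ∈ ℕ and ε > 0 with |x_k| < |x_p| − ε for all k ≠ p. Then the sup norm φ(y) = supₙ |yₙ| is Fréchet differentiable at x with derivative h ↦ sign(x_p)·h_p. In fact, for all h with ‖h‖ < ε/2 one has φ(x+h) − φ(x) = sign(x_p)·h_p exactly. -/
open Filter Topology

lemma lp_norm_eq_of_dominant (f : lp (fun _ : ℕ => ℝ) ⊤) (p : ℕ)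
    (hf : ∀ k, |f k| ≤ |f p|) : ‖f‖ = |f p| := by
  refine le_antisymm ?_ ?_
  · exact lp.norm_le_of_forall_le' (E := fun _ : ℕ => ℝ) |f p| (fun i => hf i)
  · exact lp.norm_apply_le_norm ENNReal.top_ne_zero f p

lemma sign_mul_of_small {a h : ℝ} (hh : |h| < |a|) : |a + h| - |a| = Real.sign a * h := by
  rcases lt_trichotomy a 0 with ha | ha | ha
  · rw [Real.sign_of_neg ha]
    rw [abs_of_neg ha] at hh
    rw [abs_of_neg (by cases abs_lt.1 hh; linarith), abs_of_neg ha]; ring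
  · simp [ha] at hh; simp [abs_lt] at hh; linarith [abs_nonneg h]
  · rw [Real.sign_of_pos ha]
    rw [abs_of_pos ha] at hh
    rw [abs_of_pos (by cases abs_lt.1 hh; linarith), abs_of_pos ha]; ring

/-- If `x ∈ ℓ∞(ℝ)` has a strictly dominant coordinate `p` (with gap `ε`), then the sup norm is
Fréchet differentiable at `x` with derivative `h ↦ sign (x p) * h p`; in fact
`‖x + h‖ - ‖x‖ = sign (x p) * h p` exactly whenever `‖h‖ < ε / 2`. -/
theorem linf_norm_frechet_at_dominant (x : lp (fun _ : ℕ => ℝ) ⊤) (p : ℕ) (ε : ℝ)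
    (hε : 0 < ε) (hdom : ∀ k : ℕ, k ≠ p → |x k| < |x p| - ε) :
    ∃ u : lp (fun _ : ℕ => ℝ) ⊤ →L[ℝ] ℝ,
      (∀ h : lp (fun _ : ℕ => ℝ) ⊤, u h = Real.sign (x p) * h p) ∧
      HasFDerivAt (fun y : lp (fun _ : ℕ => ℝ) ⊤ => ‖y‖) u x ∧
      (∀ h : lp (fun _ : ℕ => ℝ) ⊤, ‖h‖ < ε / 2 → ‖x + h‖ - ‖x‖ = Real.sign (x p) * h p) := by
  -- evaluation functional
  have habs : ∀ (h : lp (fun _ : ℕ => ℝ) ⊤) (k : ℕ), |h k| ≤ ‖h‖ := fun h k =>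
    lp.norm_apply_le_norm ENNReal.top_ne_zero h k
  have hxp : ε ≤ |x p| := by
    have := hdom (p + 1) (by omega)
    have := abs_nonneg (x (p + 1)); linarith
  set s := Real.sign (x p)
  let L : lp (fun _ : ℕ => ℝ) ⊤ →ₗ[ℝ] ℝ :=
    { toFun := fun h => s * h p
      map_add' := fun a b => by simp [lp.coeFn_add, Pi.add_apply]; ring
      map_smul' := fun c a => by simp [lp.coeFn_smul, Pi.smul_apply]; ring }
  have hsle : |s| ≤ 1 := by
    rcases lt_trichotomy (x p) 0 with h0 | h0 | h0 <;>
      simp [s, Real.sign_of_neg, Real.sign_of_pos, h0]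
  let u : lp (fun _ : ℕ => ℝ) ⊤ →L[ℝ] ℝ := L.mkContinuous 1 (fun h => by
    simp only [L, LinearMap.coe_mk, AddHom.coe_mk, Real.norm_eq_abs, abs_mul, one_mul]
    calc |s| * |h p| ≤ 1 * ‖h‖ := by
          exact mul_le_mul hsle (habs h p) (abs_nonneg _) zero_le_one
      _ = ‖h‖ := one_mul _)
  have key : ∀ h : lp (fun _ : ℕ => ℝ) ⊤, ‖h‖ < ε / 2 → ‖x + h‖ - ‖x‖ = s * h p := by
    intro h hh
    have hxnorm : ‖x‖ = |x p| := lp_norm_eq_of_dominant x p (fun k => by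
      by_cases hk : k = p
      · subst hk; exact le_rfl
      · exact le_of_lt (lt_of_lt_of_le (hdom k hk) (by linarith)))
    have hsum : ‖x + h‖ = |x p + h p| := by
      have := lp_norm_eq_of_dominant (x + h) p (fun k => by
        by_cases hk : k = p
        · subst hk; exact le_rfl
        · have h1 : |h k| < ε / 2 := lt_of_le_of_lt (habs h k) hh
          have h2 : |h p| < ε / 2 := lt_of_le_of_lt (habs h p) hh
          have h3 := hdom k hk
          have e1 : ((x + h : lp (fun _ : ℕ => ℝ) ⊤) : ℕ → ℝ) k = x k + h k := by
            simp [lp.coeFn_add]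
          have e2 : ((x + h : lp (fun _ : ℕ => ℝ) ⊤) : ℕ → ℝ) p = x p + h p := by
            simp [lp.coeFn_add]
          rw [e1, e2]
          have h4 : |x p| ≤ |x p + h p| + |h p| := by
            calc |x p| = |(x p + h p) + (-(h p))| := by ring_nf
              _ ≤ |x p + h p| + |-(h p)| := abs_add_le _ _
              _ = |x p + h p| + |h p| := by rw [abs_neg]
          calc |x k + h k| ≤ |x k| + |h k| := abs_add_le _ _
            _ ≤ |x p + h p| := by linarith)
      rw [this]
      have e2 : ((x + h : lp (fun _ : ℕ => ℝ) ⊤) : ℕ → ℝ) p = x p + h p := by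
        simp [lp.coeFn_add]
      rw [e2]
    rw [hsum, hxnorm]
    exact sign_mul_of_small (lt_of_le_of_lt (habs h p) (by linarith))
  refine ⟨u, fun h => rfl, ?_, key⟩
  -- derivative: use local equality with an affine map
  have hg : HasFDerivAt (fun y : lp (fun _ : ℕ => ℝ) ⊤ => u y + (‖x‖ - u x)) u x :=
    u.hasFDerivAt.add_const (‖x‖ - u x)
  refine hg.congr_of_eventuallyEq ?_
  filter_upwards [Metric.ball_mem_nhds x (by positivity : (0:ℝ) < ε / 2)] with y hy
  have h1 : ‖y - x‖ < ε / 2 := by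
    rw [Metric.mem_ball, dist_eq_norm] at hy; exact hy
  have hk := key (y - x) h1
  rw [add_sub_cancel] at hk
  have hu : u (y - x) = u y - u x := by rw [map_sub]
  have hsub : ((y - x : lp (fun _ : ℕ => ℝ) ⊤) : ℕ → ℝ) p = y p - x p := by
    simp [lp.coeFn_sub]
  rw [hsub] at hk
  show ‖y‖ = s * y p + (‖x‖ - s * x p)
  have := mul_sub s ((y : ℕ → ℝ) p) ((x : ℕ → ℝ) p)
  linarith
end

section
/- Let x ∈ ℓ∞(ℝ) be a bounded sequence such that for every p ∈ ℕ and every ε > 0 there exists k ≠ p with |x_k| ≥ |x_p| − ε (i.e., the strict dominance condition fails at every index). Then the sup norm φ(y) = supₙ |yₙ| is not Gâteaux differentiable at x. -/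
set_option maxHeartbeats 1000000
set_option synthInstance.maxHeartbeats 400000

open Filter Topology

private lemma limit_right {q : ℝ → ℝ} {L c : ℝ}
    (hq : Tendsto q (𝓝[≠] (0:ℝ)) (𝓝 L)) (he : ∀ᶠ t in 𝓝[>] (0:ℝ), q t = c) : L = c := by
  have h1 : Tendsto q (𝓝[>] (0:ℝ)) (𝓝 L) :=
    hq.mono_left (nhdsWithin_mono 0 (fun t ht => ht.ne'))
  have h2 : Tendsto q (𝓝[>] (0:ℝ)) (𝓝 c) :=
    Tendsto.congr' (he.mono fun t ht => ht.symm) tendsto_const_nhds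
  exact tendsto_nhds_unique h1 h2

private lemma limit_left {q : ℝ → ℝ} {L c : ℝ}
    (hq : Tendsto q (𝓝[≠] (0:ℝ)) (𝓝 L)) (he : ∀ᶠ t in 𝓝[<] (0:ℝ), q t = c) : L = c := by
  have h1 : Tendsto q (𝓝[<] (0:ℝ)) (𝓝 L) :=
    hq.mono_left (nhdsWithin_mono 0 (fun t ht => ne_of_lt ht))
  have h2 : Tendsto q (𝓝[<] (0:ℝ)) (𝓝 c) :=
    Tendsto.congr' (he.mono fun t ht => ht.symm) tendsto_const_nhds
  exact tendsto_nhds_unique h1 h2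

private lemma norm_eq_of (f : lp (fun _ : ℕ => ℝ) ⊤) (C : ℝ)
    (hub : ∀ n, |f n| ≤ C) (hlb : ∀ ε : ℝ, 0 < ε → ∃ n, C - ε < |f n|) : ‖f‖ = C := by
  have hb : BddAbove (Set.range fun n => ‖f n‖) := ⟨C, by rintro _ ⟨n, rfl⟩; simpa using hub n⟩
  rw [lp.norm_eq_ciSup]
  apply le_antisymm
  · exact ciSup_le fun n => by simpa using hub n
  · refine le_of_forall_pos_le_add fun ε hε => ?_
    obtain ⟨n, hn⟩ := hlb ε hε
    have h2 := le_ciSup hb n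
    simp only [Real.norm_eq_abs] at h2 ⊢
    linarith

private noncomputable def mkLinf (f : ℕ → ℝ) (C : ℝ) (hf : ∀ n, |f n| ≤ C) :
    lp (fun _ : ℕ => ℝ) ⊤ :=
  ⟨f, memℓp_infty ⟨C, by rintro _ ⟨n, rfl⟩; simpa using hf n⟩⟩

private lemma abs_add_sign (a e : ℝ) : |a + e * (if 0 ≤ a then (1:ℝ) else -1)| = |(|a| + e)| := by
  rcases le_or_gt 0 a with h | h
  · rw [if_pos h, mul_one, abs_of_nonneg h]
  · rw [if_neg (not_le.mpr h)]
    have he : a + e * (-1) = -(|a| + e) := by rw [abs_of_neg h]; ring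
    rw [he, abs_neg]

private noncomputable def seqAux (F : ℝ → ℕ) (v : ℕ → ℝ) (N : ℝ) : ℕ → ℕ
  | 0 => F 0
  | j + 1 => F (max (v (seqAux F v N j)) (N - N / ((j : ℝ) + 2)))

private lemma seqAux_max_lt {F : ℝ → ℕ} {v : ℕ → ℝ} {N : ℝ} (hN : 0 < N)
    (hv : ∀ n, v n < N) (j : ℕ) :
    max (v (seqAux F v N j)) (N - N / ((j : ℝ) + 2)) < N := by
  apply max_lt (hv _)
  have : 0 < N / ((j : ℝ) + 2) := div_pos hN (by positivity)
  linarith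

private lemma seqAux_lb {F : ℝ → ℕ} {v : ℕ → ℝ} {N : ℝ} (hN : 0 < N)
    (hF : ∀ c, c < N → c < v (F c)) (hv : ∀ n, v n < N) :
    ∀ j : ℕ, N - N / ((j : ℝ) + 1) < v (seqAux F v N j)
  | 0 => by
      have h0 := hF 0 hN
      rw [seqAux]
      have he : N - N / ((0 : ℕ) + 1 : ℝ) = 0 := by norm_num
      rw [he]
      exact h0
  | j + 1 => by
      have h1 := hF _ (seqAux_max_lt (F := F) hN hv j)
      have h2 : N - N / ((j : ℝ) + 2) ≤ max (v (seqAux F v N j)) (N - N / ((j : ℝ) + 2)) :=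
        le_max_right _ _
      rw [seqAux]
      have he : N - N / ((j + 1 : ℕ) + 1 : ℝ) = N - N / ((j : ℝ) + 2) := by push_cast; ring_nf
      rw [he]
      exact lt_of_le_of_lt h2 h1

private lemma seqAux_inj {F : ℝ → ℕ} {v : ℕ → ℝ} {N : ℝ} (hN : 0 < N)
    (hF : ∀ c, c < N → c < v (F c)) (hv : ∀ n, v n < N) :
    Function.Injective (seqAux F v N) := by
  have hmono : StrictMono (fun j => v (seqAux F v N j)) := by
    apply strictMono_nat_of_lt_succ
    intro j
    have h1 := hF _ (seqAux_max_lt (F := F) hN hv j)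
    rw [seqAux]
    exact lt_of_le_of_lt (le_max_left _ _) h1
  intro a b hab
  exact hmono.injective (by rw [hab])

/-- If the strict dominance condition fails at every index of `x ∈ ℓ∞(ℝ)`, then the sup norm
is not Gâteaux differentiable at `x`. -/
theorem linf_norm_not_gateaux (x : lp (fun _ : ℕ => ℝ) ⊤)
    (hx : ∀ p : ℕ, ∀ ε : ℝ, 0 < ε → ∃ k : ℕ, k ≠ p ∧ |x p| - ε ≤ |x k|) :
    ¬ ∃ u : lp (fun _ : ℕ => ℝ) ⊤ →L[ℝ] ℝ,
        IsGateauxDerivAt (fun y : lp (fun _ : ℕ => ℝ) ⊤ => ‖y‖) u x := by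
  classical
  rintro ⟨u, hu⟩
  have hxN : ∀ n, |x n| ≤ ‖x‖ := fun n => by
    have h1 := lp.norm_apply_le_norm ENNReal.top_ne_zero x n
    rwa [Real.norm_eq_abs] at h1
  have coord : ∀ (t : ℝ) (h : lp (fun _ : ℕ => ℝ) ⊤) (n : ℕ),
      (x + t • h) n = x n + t * h n := by
    intro t h n
    rw [lp.coeFn_add, Pi.add_apply, lp.coeFn_smul, Pi.smul_apply, smul_eq_mul]
  rcases (norm_nonneg x).eq_or_lt with hN0 | hN0
  · -- ‖x‖ = 0
    have hx0 : ∀ n, x n = 0 := by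
      intro n
      have h1 := hxN n
      rw [← hN0] at h1
      exact abs_nonpos_iff.mp h1
    obtain ⟨h, hcoe⟩ : ∃ h : lp (fun _ : ℕ => ℝ) ⊤,
        ∀ n, h n = (if n = 0 then (1:ℝ) else 0) :=
      ⟨mkLinf (fun n => if n = 0 then (1:ℝ) else 0) 1
        (fun n => by split <;> norm_num), fun n => rfl⟩
    have hq : Tendsto (fun t : ℝ => (‖x + t • h‖ - ‖x‖) / t) (𝓝[≠] (0:ℝ)) (𝓝 (u h)) := hu h
    have hnorm : ∀ t : ℝ, ‖x + t • h‖ = |t| := by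
      intro t
      apply norm_eq_of
      · intro n
        rw [coord, hcoe n, hx0 n, zero_add]
        split
        · rw [mul_one]
        · rw [mul_zero, abs_zero]; exact abs_nonneg t
      · intro ε hε
        refine ⟨0, ?_⟩
        rw [coord, hcoe 0, hx0 0, zero_add, if_pos rfl, mul_one]
        linarith
    have e1 : u h = 1 := by
      apply limit_right hq
      filter_upwards [self_mem_nhdsWithin] with t ht
      rw [hnorm t, ← hN0, sub_zero, abs_of_pos ht, div_self (ne_of_gt ht)]
    have e2 : u h = -1 := by
      apply limit_left hq
      filter_upwards [self_mem_nhdsWithin] with t ht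
      rw [hnorm t, ← hN0, sub_zero, abs_of_neg ht, neg_div, div_self (ne_of_lt ht)]
    linarith
  · by_cases hattain : ∃ p, |x p| = ‖x‖
    · -- attained case
      obtain ⟨p, hp⟩ := hattain
      obtain ⟨h, hcoe⟩ : ∃ h : lp (fun _ : ℕ => ℝ) ⊤,
          ∀ n, h n = (if n = p then (if 0 ≤ x p then (1:ℝ) else -1) else 0) :=
        ⟨mkLinf (fun n => if n = p then (if 0 ≤ x p then (1:ℝ) else -1) else 0) 1
          (fun n => by dsimp only; split
                       · split <;> norm_num
                       · norm_num), fun n => rfl⟩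
      have hq : Tendsto (fun t : ℝ => (‖x + t • h‖ - ‖x‖) / t) (𝓝[≠] (0:ℝ)) (𝓝 (u h)) := hu h
      have e1 : u h = 1 := by
        apply limit_right hq
        filter_upwards [self_mem_nhdsWithin] with t ht
        have htpos : (0:ℝ) < t := ht
        have hn : ‖x + t • h‖ = ‖x‖ + t := by
          apply norm_eq_of
          · intro n
            rw [coord, hcoe n]
            by_cases hnp : n = p
            · subst hnp
              rw [if_pos rfl, abs_add_sign, hp,
                abs_of_nonneg (by linarith : (0:ℝ) ≤ ‖x‖ + t)]
            · rw [if_neg hnp, mul_zero, add_zero]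
              have := hxN n
              linarith
          · intro ε hε
            refine ⟨p, ?_⟩
            rw [coord, hcoe p, if_pos rfl, abs_add_sign, hp,
              abs_of_nonneg (by linarith : (0:ℝ) ≤ ‖x‖ + t)]
            linarith
        rw [hn]
        have he : ‖x‖ + t - ‖x‖ = t := by ring
        rw [he, div_self (ne_of_gt htpos)]
      have e2 : u h = 0 := by
        apply limit_left hq
        have hm : Set.Ioo (-‖x‖) 0 ∈ 𝓝[<] (0:ℝ) :=
          Ioo_mem_nhdsLT_of_mem ⟨by linarith, le_refl 0⟩
        filter_upwards [hm] with t ht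
        obtain ⟨ht1, ht2⟩ := ht
        have hn : ‖x + t • h‖ = ‖x‖ := by
          apply norm_eq_of
          · intro n
            rw [coord, hcoe n]
            by_cases hnp : n = p
            · subst hnp
              rw [if_pos rfl, abs_add_sign, hp,
                abs_of_nonneg (by linarith : (0:ℝ) ≤ ‖x‖ + t)]
              linarith
            · rw [if_neg hnp, mul_zero, add_zero]; exact hxN n
          · intro ε hε
            obtain ⟨k, hk, hk2⟩ := hx p (ε/2) (by linarith)
            refine ⟨k, ?_⟩
            rw [coord, hcoe k, if_neg hk, mul_zero, add_zero]
            rw [hp] at hk2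
            linarith
        rw [hn, sub_self, zero_div]
      linarith
    · -- not attained
      push_neg at hattain
      have hv : ∀ n, |x n| < ‖x‖ := fun n => lt_of_le_of_ne (hxN n) (hattain n)
      have key : ∀ c : ℝ, c < ‖x‖ → ∃ n, c < |x n| := by
        intro c hc
        rw [lp.norm_eq_ciSup] at hc
        obtain ⟨n, hn⟩ := exists_lt_of_lt_ciSup hc
        exact ⟨n, by simpa using hn⟩
      set F : ℝ → ℕ := fun c => if hc : c < ‖x‖ then (key c hc).choose else 0 with hF_def
      have hF : ∀ c, c < ‖x‖ → c < |x (F c)| := by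
        intro c hc
        simp only [hF_def, dif_pos hc]
        exact (key c hc).choose_spec
      set g : ℕ → ℕ := seqAux F (fun n => |x n|) ‖x‖ with hg_def
      have hg1 : ∀ j : ℕ, ‖x‖ - ‖x‖ / ((j:ℝ)+1) < |x (g j)| := seqAux_lb hN0 hF hv
      have hginj : Function.Injective g := seqAux_inj hN0 hF hv
      obtain ⟨h, hcoe⟩ : ∃ h : lp (fun _ : ℕ => ℝ) ⊤,
          ∀ n, h n = ((if ∃ j, g (2*j) = n then (1:ℝ)
              else if ∃ j, g (2*j+1) = n then -1 else 0)
            * (if 0 ≤ x n then (1:ℝ) else -1)) :=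
        ⟨mkLinf (fun n => ((if ∃ j, g (2*j) = n then (1:ℝ)
              else if ∃ j, g (2*j+1) = n then -1 else 0)
            * (if 0 ≤ x n then (1:ℝ) else -1))) 1
          (fun n => by
            dsimp only
            rw [abs_mul]
            have h2 : |(if 0 ≤ x n then (1:ℝ) else -1)| = 1 := by split <;> norm_num
            rw [h2, mul_one]
            split
            · norm_num
            · split <;> norm_num), fun n => rfl⟩
      have hb : ∀ n, |h n| ≤ 1 := by
        intro n
        rw [hcoe n, abs_mul]
        have h2 : |(if 0 ≤ x n then (1:ℝ) else -1)| = 1 := by split <;> norm_num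
        rw [h2, mul_one]
        split
        · norm_num
        · split <;> norm_num
      have hodd : ∀ j : ℕ, ¬ ∃ j', g (2*j') = g (2*j+1) := by
        rintro j ⟨j', hj'⟩
        have := hginj hj'
        omega
      have hq : Tendsto (fun t : ℝ => (‖x + t • h‖ - ‖x‖) / t) (𝓝[≠] (0:ℝ)) (𝓝 (u h)) := hu h
      have hnorm : ∀ t : ℝ, ‖x + t • h‖ = ‖x‖ + |t| := by
        intro t
        apply norm_eq_of
        · intro n
          rw [coord]
          calc |x n + t * h n| ≤ |x n| + |t| * |h n| := by
                rw [← abs_mul]; exact abs_add_le _ _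
            _ ≤ ‖x‖ + |t| := add_le_add (hxN n)
                (by nlinarith [hb n, abs_nonneg t, abs_nonneg (h n)])
        · intro ε hε
          obtain ⟨j, hj⟩ : ∃ j : ℕ, ‖x‖ / ((j:ℝ)+1) < ε := by
            obtain ⟨j, hj⟩ := exists_nat_gt (‖x‖ / ε)
            refine ⟨j, ?_⟩
            rw [div_lt_iff₀ (by positivity : (0:ℝ) < (j:ℝ)+1)]
            have h3 := (div_lt_iff₀ hε).mp hj
            nlinarith
          rcases le_or_gt 0 t with ht | ht
          · refine ⟨g (2*j), ?_⟩
            have hs : h (g (2*j)) = (if 0 ≤ x (g (2*j)) then (1:ℝ) else -1) := by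
              rw [hcoe, if_pos ⟨j, rfl⟩, one_mul]
            rw [coord, hs, abs_add_sign,
              abs_of_nonneg (by linarith [abs_nonneg (x (g (2*j)))] : (0:ℝ) ≤ |x (g (2*j))| + t)]
            have h1 := hg1 (2*j)
            have h2 : ‖x‖ / (((2*j:ℕ):ℝ)+1) ≤ ‖x‖ / ((j:ℝ)+1) := by
              apply div_le_div_of_nonneg_left (norm_nonneg x) (by positivity)
              push_cast; linarith
            rw [abs_of_nonneg ht]
            linarith
          · refine ⟨g (2*j+1), ?_⟩
            have hs : h (g (2*j+1)) = -(if 0 ≤ x (g (2*j+1)) then (1:ℝ) else -1) := by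
              rw [hcoe, if_neg (hodd j), if_pos ⟨j, rfl⟩]; ring
            rw [coord, hs]
            have heq : x (g (2*j+1)) + t * -(if 0 ≤ x (g (2*j+1)) then (1:ℝ) else -1)
                = x (g (2*j+1)) + (-t) * (if 0 ≤ x (g (2*j+1)) then (1:ℝ) else -1) := by ring
            rw [heq, abs_add_sign,
              abs_of_nonneg (by linarith [abs_nonneg (x (g (2*j+1)))] : (0:ℝ) ≤ |x (g (2*j+1))| + -t)]
            have h1 := hg1 (2*j+1)
            have h2 : ‖x‖ / (((2*j+1:ℕ):ℝ)+1) ≤ ‖x‖ / ((j:ℝ)+1) := by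
              apply div_le_div_of_nonneg_left (norm_nonneg x) (by positivity)
              push_cast; linarith
            rw [abs_of_neg ht]
            linarith
      have e1 : u h = 1 := by
        apply limit_right hq
        filter_upwards [self_mem_nhdsWithin] with t ht
        have htpos : (0:ℝ) < t := ht
        rw [hnorm t, abs_of_pos htpos]
        have he : ‖x‖ + t - ‖x‖ = t := by ring
        rw [he, div_self (ne_of_gt htpos)]
      have e2 : u h = -1 := by
        apply limit_left hq
        filter_upwards [self_mem_nhdsWithin] with t ht
        have htneg : t < (0:ℝ) := ht
        rw [hnorm t, abs_of_neg htneg]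
        have : ‖x‖ + -t - ‖x‖ = -t := by ring
        rw [this, neg_div, div_self (ne_of_lt htneg)]
      linarith
end

section
/- The set B of bounded sequences x ∈ ℓ∞(ℝ) for which there exist p ∈ ℕ and ε > 0 with |x_k| < |x_p| − ε for all k ≠ p is an open subset of ℓ∞(ℝ). -/
/-- The set of `x ∈ ℓ∞(ℝ)` with a strictly dominant coordinate is open. -/
theorem dominant_set_isOpen :
    IsOpen {x : lp (fun _ : ℕ => ℝ) ⊤ |
      ∃ p : ℕ, ∃ ε : ℝ, 0 < ε ∧ ∀ k : ℕ, k ≠ p → |x k| < |x p| - ε} := by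
  rw [Metric.isOpen_iff]
  rintro x ⟨p, ε, hε, hx⟩
  refine ⟨ε / 3, by linarith, fun y hy => ⟨p, ε / 3, by linarith, fun k hk => ?_⟩⟩
  have hcoord : ∀ i : ℕ, |y i - x i| ≤ ε / 3 := by
    intro i
    have := lp.norm_apply_le_norm (by norm_num : (⊤ : ENNReal) ≠ 0) (y - x) i
    have h2 : ‖y - x‖ < ε / 3 := by
      rw [Metric.mem_ball, dist_eq_norm] at hy; exact hy
    have h3 : (y - x) i = y i - x i := by simp
    rw [h3] at this
    calc |y i - x i| = ‖y i - x i‖ := rfl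
      _ ≤ ‖y - x‖ := this
      _ ≤ ε / 3 := h2.le
  have h1 := hcoord k
  have h2 := hcoord p
  have h3 := hx k hk
  have a1 : |y k| ≤ |x k| + ε / 3 := by
    have := abs_sub_abs_le_abs_sub (y k) (x k); linarith
  have a2 : |x p| ≤ |y p| + ε / 3 := by
    have := abs_sub_abs_le_abs_sub (x p) (y p)
    have : |x p - y p| ≤ ε / 3 := by rw [abs_sub_comm]; exact h2
    have := abs_sub_abs_le_abs_sub (x p) (y p)
    rw [abs_sub_comm (x p)] at this; linarith
  linarith
end

section
/- The seminorm φ(x) = lim supₙ |xₙ| on ℓ∞(ℝ) is not Gâteaux differentiable at any point x ∈ ℓ∞(ℝ). -/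
open Filter Topology

/-- The seminorm `φ(x) = limsupₙ |xₙ|` on ℓ∞(ℝ) is Gâteaux differentiable at no point. -/
theorem limsup_abs_not_gateaux (x : lp (fun _ : ℕ => ℝ) ⊤) :
    ¬ ∃ u : lp (fun _ : ℕ => ℝ) ⊤ →L[ℝ] ℝ,
        IsGateauxDerivAt
          (fun y : lp (fun _ : ℕ => ℝ) ⊤ => Filter.limsup (fun n : ℕ => |y n|) Filter.atTop)
          u x := by
  classical
  rintro ⟨u, hu⟩
  set L := limsup (fun n : ℕ => |x n|) atTop with hLdef
  have hxn : ∀ n : ℕ, |x n| ≤ ‖x‖ := fun n => by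
    have := lp.norm_apply_le_norm (E := fun _ : ℕ => ℝ) ENNReal.top_ne_zero x n
    rwa [Real.norm_eq_abs] at this
  have hbdd : IsBoundedUnder (· ≤ ·) atTop (fun n : ℕ => |x n|) :=
    Filter.isBoundedUnder_of ⟨‖x‖, hxn⟩
  have hbdd2 : IsBoundedUnder (· ≥ ·) atTop (fun n : ℕ => |x n|) :=
    Filter.isBoundedUnder_of ⟨0, fun n => abs_nonneg _⟩
  have hcob : IsCoboundedUnder (· ≤ ·) atTop (fun n : ℕ => |x n|) :=
    hbdd2.isCoboundedUnder_flip
  have hfreq : ∀ i : ℕ, ∃ᶠ k in atTop, L - 1/((i:ℝ)+1) < |x k| := by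
    intro i
    apply frequently_lt_of_lt_limsup hcob
    have : (0:ℝ) < 1/((i:ℝ)+1) := by positivity
    linarith
  obtain ⟨ψ, hψmono, hψ⟩ := extraction_forall_of_frequently hfreq
  set A : Set ℕ := Set.range (fun i => ψ (2*i)) with hAdef
  set h : ℕ → ℝ := fun n => if n ∈ A then (if x n < 0 then -1 else 1) else 0 with hdef
  have habs : ∀ n, |h n| ≤ 1 := by
    intro n; simp only [hdef]; split_ifs <;> norm_num
  have hmem : Memℓp h ⊤ := memℓp_infty ⟨1, by rintro - ⟨n, rfl⟩; simpa using habs n⟩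
  set H : lp (fun _ : ℕ => ℝ) ⊤ := ⟨h, hmem⟩ with hHdef
  have hcoe : ∀ (t : ℝ) (n : ℕ), ((x + t • H) : ∀ _ : ℕ, ℝ) n = x n + t * h n := by
    intro t n
    simp [hHdef]
  -- boundedness of perturbed sequences
  have hbdd' : ∀ t : ℝ, IsBoundedUnder (· ≤ ·) atTop (fun n : ℕ => |x n + t * h n|) := by
    intro t
    refine Filter.isBoundedUnder_of ⟨‖x‖ + |t|, fun n : ℕ => ?_⟩
    have h1 : |x n| ≤ ‖x‖ := hxn n
    have h2 : |t * h n| ≤ |t| := by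
      rw [abs_mul]
      calc |t| * |h n| ≤ |t| * 1 := by
            exact mul_le_mul_of_nonneg_left (habs n) (abs_nonneg t)
        _ = |t| := mul_one _
    calc |x n + t * h n| ≤ |x n| + |t * h n| := abs_add_le _ _
      _ ≤ ‖x‖ + |t| := add_le_add h1 h2
  -- key value computation along the even subsequence
  have heval_even : ∀ (t : ℝ), 0 ≤ t → ∀ i : ℕ,
      |x (ψ (2*i)) + t * h (ψ (2*i))| = |x (ψ (2*i))| + t := by
    intro t ht i
    have hmemA : ψ (2*i) ∈ A := ⟨i, rfl⟩
    have : h (ψ (2*i)) = if x (ψ (2*i)) < 0 then -1 else 1 := by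
      simp [hdef, hmemA]
    rw [this]
    rcases lt_or_ge (x (ψ (2*i))) 0 with hneg | hpos
    · rw [if_pos hneg, abs_of_neg hneg, abs_of_nonpos (by linarith)]; ring
    · rw [if_neg (not_lt.mpr hpos), abs_of_nonneg hpos, abs_of_nonneg (by linarith)]; ring
  have heval_odd : ∀ (t : ℝ) (i : ℕ),
      |x (ψ (2*i+1)) + t * h (ψ (2*i+1))| = |x (ψ (2*i+1))| := by
    intro t i
    have hnotA : ψ (2*i+1) ∉ A := by
      rintro ⟨j, hj⟩
      have := hψmono.injective hj
      omega
    have : h (ψ (2*i+1)) = 0 := by simp [hdef, hnotA]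
    rw [this, mul_zero, add_zero]
  -- lower bound for t ≥ 0 : limsup ≥ L + t
  have hlow_pos : ∀ t : ℝ, 0 ≤ t →
      L + t ≤ limsup (fun n : ℕ => |x n + t * h n|) atTop := by
    intro t ht
    refine le_of_forall_pos_le_add fun ε hε => ?_
    have hfr : ∃ᶠ n in atTop, L + t - ε ≤ |x n + t * h n| := by
      rw [frequently_atTop]
      intro N
      obtain ⟨M, hM⟩ := exists_nat_one_div_lt hε
      refine ⟨ψ (2 * max N M), le_trans (le_trans (le_max_left N M)
        (by have := hψmono.le_apply (x := 2 * max N M); omega)) (le_refl _), ?_⟩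
      rw [heval_even t ht]
      have h1 := hψ (2 * max N M)
      have h2 : 1/(((2 * max N M : ℕ) : ℝ) + 1) ≤ 1/((M:ℝ)+1) := by
        apply one_div_le_one_div_of_le (by positivity)
        have : (M : ℝ) ≤ ((2 * max N M : ℕ) : ℝ) := by
          exact_mod_cast Nat.le_trans (le_max_right N M) (by omega)
        linarith
      have h3 : 1/((M:ℝ)+1) < ε := hM
      push_cast at h1 h2 ⊢
      linarith
    have := le_limsup_of_frequently_le hfr (hbdd' t)
    linarith
  -- lower bound for arbitrary t : limsup ≥ L
  have hlow : ∀ t : ℝ, L ≤ limsup (fun n : ℕ => |x n + t * h n|) atTop := by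
    intro t
    refine le_of_forall_pos_le_add fun ε hε => ?_
    have hfr : ∃ᶠ n in atTop, L - ε ≤ |x n + t * h n| := by
      rw [frequently_atTop]
      intro N
      obtain ⟨M, hM⟩ := exists_nat_one_div_lt hε
      refine ⟨ψ (2 * max N M + 1), le_trans (le_trans (le_max_left N M)
        (by have := hψmono.le_apply (x := 2 * max N M + 1); omega)) (le_refl _), ?_⟩
      rw [heval_odd t]
      have h1 := hψ (2 * max N M + 1)
      have h2 : 1/(((2 * max N M + 1 : ℕ) : ℝ) + 1) ≤ 1/((M:ℝ)+1) := by
        apply one_div_le_one_div_of_le (by positivity)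
        have : (M : ℝ) ≤ ((2 * max N M + 1 : ℕ) : ℝ) := by
          exact_mod_cast Nat.le_trans (le_max_right N M) (by omega)
        linarith
      have h3 : 1/((M:ℝ)+1) < ε := hM
      push_cast at h1 h2 ⊢
      linarith
    have := le_limsup_of_frequently_le hfr (hbdd' t)
    linarith
  -- the difference quotient
  set Q : ℝ → ℝ := fun t =>
    ((limsup (fun n : ℕ => |(x + t • H) n|) atTop) - L) / t with hQdef
  have hQeq : ∀ t : ℝ, Q t = ((limsup (fun n : ℕ => |x n + t * h n|) atTop) - L) / t := by
    intro t
    have he : (fun n : ℕ => |(x + t • H) n|) = fun n : ℕ => |x n + t * h n| := by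
      funext n
      have : (x + t • H) n = x n + t * h n := by
        rw [lp.coeFn_add, lp.coeFn_smul]
        simp [hHdef]
      rw [this]
    simp only [hQdef, he]
  have htend : Tendsto Q (𝓝[≠] (0:ℝ)) (𝓝 (u H)) := hu H
  -- from the right : u H ≥ 1
  have hright : Tendsto Q (𝓝[>] (0:ℝ)) (𝓝 (u H)) :=
    htend.mono_left (nhdsWithin_mono _ fun t ht => ne_of_gt ht)
  have h1le : 1 ≤ u H := by
    refine ge_of_tendsto hright ?_
    filter_upwards [self_mem_nhdsWithin] with t ht
    rw [hQeq]
    rw [le_div_iff₀ ht]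
    have := hlow_pos t (le_of_lt ht)
    linarith
  -- from the left : u H ≤ 0
  have hleft : Tendsto Q (𝓝[<] (0:ℝ)) (𝓝 (u H)) :=
    htend.mono_left (nhdsWithin_mono _ fun t ht => ne_of_lt ht)
  have h0ge : u H ≤ 0 := by
    refine le_of_tendsto hleft ?_
    filter_upwards [self_mem_nhdsWithin] with t ht
    rw [hQeq]
    apply div_nonpos_of_nonneg_of_nonpos
    · have := hlow t; linarith
    · exact le_of_lt ht
  linarith
end

section
/- The total variation norm φ(f) = V_a^b(f) on the space BV₀[a,b] of functions of bounded variation on [a,b] with f(a) = 0 is not Gâteaux differentiable at any point. -/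
open Filter Topology Set

/-- The total variation of `f` on `[a, b]`, as a real number. -/
noncomputable def totalVar (a b : ℝ) (f : ℝ → ℝ) : ℝ :=
  (eVariationOn f (Set.Icc a b)).toReal

private lemma evar_add_le (f g : ℝ → ℝ) (s : Set ℝ) :
    eVariationOn (f + g) s ≤ eVariationOn f s + eVariationOn g s := by
  refine iSup_le ?_
  rintro ⟨n, u, hu, us⟩
  calc ∑ i ∈ Finset.range n, edist ((f + g) (u (i + 1))) ((f + g) (u i))
      ≤ ∑ i ∈ Finset.range n,
          (edist (f (u (i + 1))) (f (u i)) + edist (g (u (i + 1))) (g (u i))) :=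
        Finset.sum_le_sum fun i _ => edist_add_add_le _ _ _ _
    _ = (∑ i ∈ Finset.range n, edist (f (u (i + 1))) (f (u i)))
        + ∑ i ∈ Finset.range n, edist (g (u (i + 1))) (g (u i)) := Finset.sum_add_distrib
    _ ≤ _ := add_le_add (eVariationOn.sum_le (f := f) (n := n) hu us) (eVariationOn.sum_le (f := g) (n := n) hu us)

private lemma evar_neg (g : ℝ → ℝ) (s : Set ℝ) : eVariationOn (-g) s = eVariationOn g s := by
  simp only [eVariationOn, Pi.neg_apply, edist_neg_neg]

private lemma icc_split (f : ℝ → ℝ) {p q r : ℝ} (hpq : p ≤ q) (hqr : q ≤ r) :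
    eVariationOn f (Icc p q) + eVariationOn f (Icc q r) = eVariationOn f (Icc p r) := by
  have := eVariationOn.Icc_add_Icc f (s := univ) hpq hqr (mem_univ q)
  simpa using this

private lemma mono_bvOn {g : ℝ → ℝ} (hg : Monotone g) (a b : ℝ) :
    BoundedVariationOn g (Icc a b) := by
  have := (hg.monotoneOn univ).eVariationOn_le (mem_univ a) (mem_univ b)
  rw [univ_inter] at this
  exact (this.trans_lt ENNReal.ofReal_lt_top).ne

private lemma bv_add {f g : ℝ → ℝ} {s : Set ℝ} (hf : BoundedVariationOn f s)
    (hg : BoundedVariationOn g s) : BoundedVariationOn (f + g) s :=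
  ((evar_add_le f g s).trans_lt (ENNReal.add_lt_top.2 ⟨hf.lt_top, hg.lt_top⟩)).ne

/-- The total variation norm on `NBV[a,b]` (functions of bounded variation on `[a,b]`
vanishing at `a`) is Gâteaux differentiable at no point: for no `f` in the space is there a
linear functional `u` giving the Gâteaux derivative in every direction `h` from the space. -/
theorem totalVar_not_gateaux (a b : ℝ) (hab : a < b) (f : ℝ → ℝ) (hfa : f a = 0)
    (hf : BoundedVariationOn f (Set.Icc a b)) :
    ¬ ∃ u : (ℝ → ℝ) →ₗ[ℝ] ℝ, ∀ h : ℝ → ℝ, h a = 0 → BoundedVariationOn h (Set.Icc a b) →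
        Tendsto (fun t : ℝ => (totalVar a b (f + t • h) - totalVar a b f) / t)
          (𝓝[≠] (0 : ℝ)) (𝓝 (u h)) := by
  rintro ⟨u, hu⟩
  set W : ℝ → ℝ := fun x => (eVariationOn f (Icc a (min x b))).toReal with hWdef
  have hfin : ∀ s ⊆ Icc a b, eVariationOn f s ≠ ⊤ := fun s hs =>
    ((eVariationOn.mono f hs).trans_lt hf.lt_top).ne
  have Wmono : Monotone W := by
    intro x y hxy
    exact ENNReal.toReal_mono (hfin _ (Icc_subset_Icc le_rfl (min_le_right _ _)))
      (eVariationOn.mono f (Icc_subset_Icc le_rfl (min_le_min hxy le_rfl)))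
  obtain ⟨c, hc, hWc⟩ : ∃ c ∈ Ioo a b, ContinuousAt W c := by
    by_contra hcon
    push_neg at hcon
    have hcnt : (Ioo a b).Countable :=
      Wmono.countable_not_continuousAt.mono fun x hx => hcon x hx
    have h0 := hcnt.measure_zero (MeasureTheory.volume : MeasureTheory.Measure ℝ)
    rw [Real.volume_Ioo] at h0
    rw [ENNReal.ofReal_eq_zero] at h0
    linarith
  have key : ∀ ε > 0, ∃ x y : ℝ, a ≤ x ∧ x < c ∧ c < y ∧ y ≤ b ∧
      (eVariationOn f (Icc x y)).toReal < ε := by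
    intro ε hε
    obtain ⟨δ, hδ, hδ'⟩ := Metric.continuousAt_iff.1 hWc (ε / 2) (by linarith)
    set x := max a (c - δ / 2) with hxdef
    set y := min b (c + δ / 2) with hydef
    have hax : a ≤ x := le_max_left _ _
    have hxc : x < c := max_lt hc.1 (by linarith)
    have hcy : c < y := lt_min hc.2 (by linarith)
    have hyb : y ≤ b := min_le_left _ _
    refine ⟨x, y, hax, hxc, hcy, hyb, ?_⟩
    have hdx : dist x c < δ := by
      rw [Real.dist_eq, abs_lt]
      constructor
      · have : c - δ / 2 ≤ x := le_max_right _ _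
        linarith
      · linarith
    have hdy : dist y c < δ := by
      rw [Real.dist_eq, abs_lt]
      have : y ≤ c + δ / 2 := min_le_right _ _
      constructor <;> linarith
    have h1 := hδ' hdx
    have h2 := hδ' hdy
    rw [Real.dist_eq] at h1 h2
    have hWx : W x = (eVariationOn f (Icc a x)).toReal := by
      rw [hWdef]; simp only [min_eq_left (hxc.le.trans hc.2.le)]
    have hWy : W y = (eVariationOn f (Icc a y)).toReal := by
      rw [hWdef]; simp only [min_eq_left hyb]
    have hsplit := icc_split f hax (hxc.le.trans hcy.le)
    have fx : eVariationOn f (Icc a x) ≠ ⊤ :=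
      hfin _ (Icc_subset_Icc le_rfl (hxc.le.trans hc.2.le))
    have fxy : eVariationOn f (Icc x y) ≠ ⊤ := hfin _ (Icc_subset_Icc hax hyb)
    have hsum : (eVariationOn f (Icc a x)).toReal + (eVariationOn f (Icc x y)).toReal
        = (eVariationOn f (Icc a y)).toReal := by
      rw [← hsplit, ENNReal.toReal_add fx fxy]
    rw [abs_lt] at h1 h2
    rw [hWx] at h1
    rw [hWy] at h2
    linarith
  -- the spike direction
  set h : ℝ → ℝ := fun z => if z = c then (1 : ℝ) else 0 with hhdef
  have ha0 : h a = 0 := if_neg (ne_of_lt hc.1)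
  have hs1 : Monotone (fun z : ℝ => if c ≤ z then (1 : ℝ) else 0) := by
    intro p q hpq
    dsimp only
    split_ifs with h1 h2
    · exact le_rfl
    · exact absurd (h1.trans hpq) h2
    · norm_num
    · exact le_rfl
  have hs2 : Monotone (fun z : ℝ => if c < z then (1 : ℝ) else 0) := by
    intro p q hpq
    dsimp only
    split_ifs with h1 h2
    · exact le_rfl
    · exact absurd (h1.trans_le hpq) h2
    · norm_num
    · exact le_rfl
  have hheq : h = (fun z : ℝ => if c ≤ z then (1 : ℝ) else 0)
      + -(fun z : ℝ => if c < z then (1 : ℝ) else 0) := by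
    funext z
    simp only [hhdef, Pi.add_apply, Pi.neg_apply]
    rcases lt_trichotomy z c with hz | hz | hz
    · rw [if_neg (ne_of_lt hz), if_neg (not_le.2 hz), if_neg (asymm hz)]; ring
    · rw [if_pos hz, if_pos (le_of_eq hz.symm), if_neg (by simp [hz])]; ring
    · rw [if_neg (ne_of_gt hz), if_pos hz.le, if_pos hz]; ring
  have hBVh : BoundedVariationOn h (Icc a b) := by
    rw [hheq]
    refine bv_add (mono_bvOn hs1 a b) ?_
    unfold BoundedVariationOn
    rw [evar_neg]
    exact mono_bvOn hs2 a b
  have hBVth : ∀ t : ℝ, BoundedVariationOn (t • h) (Icc a b) := by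
    intro t
    have := (lipschitzWith_smul (β := ℝ) t).comp_boundedVariationOn hBVh
    convert this using 1 <;> rfl
  -- main estimate
  have main : ∀ t : ℝ, totalVar a b f + 2 * |t| ≤ totalVar a b (f + t • h) := by
    intro t
    have hgBV : BoundedVariationOn (f + t • h) (Icc a b) := bv_add hf (hBVth t)
    refine le_of_forall_pos_le_add ?_
    intro ε hε
    obtain ⟨x, y, hax, hxc, hcy, hyb, hsmall⟩ := key (ε / 3) (by linarith)
    set g : ℝ → ℝ := f + t • h with hgdef
    have hxy : x ≤ y := hxc.le.trans hcy.le
    have hxb : x ≤ b := hxy.trans hyb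
    have hay : a ≤ y := hax.trans hxy
    have hcb : c ≤ b := hcy.le.trans hyb
    have hac : a ≤ c := hax.trans hxc.le
    have gfin : ∀ s ⊆ Icc a b, eVariationOn g s ≠ ⊤ := fun s hs =>
      ((eVariationOn.mono g hs).trans_lt hgBV.lt_top).ne
    have e1 : eVariationOn g (Icc a x) = eVariationOn f (Icc a x) := by
      apply eVariationOn.eq_of_eqOn
      intro z hz
      have hz' : z ≠ c := ne_of_lt (lt_of_le_of_lt hz.2 hxc)
      simp [hgdef, hhdef, hz']
    have e3 : eVariationOn g (Icc y b) = eVariationOn f (Icc y b) := by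
      apply eVariationOn.eq_of_eqOn
      intro z hz
      have hz' : z ≠ c := ne_of_gt (lt_of_lt_of_le hcy hz.1)
      simp [hgdef, hhdef, hz']
    have e1' : (eVariationOn g (Icc a x)).toReal = (eVariationOn f (Icc a x)).toReal := by
      rw [e1]
    have e3' : (eVariationOn g (Icc y b)).toReal = (eVariationOn f (Icc y b)).toReal := by
      rw [e3]
    -- finiteness of pieces
    have fax : eVariationOn f (Icc a x) ≠ ⊤ := hfin _ (Icc_subset_Icc le_rfl hxb)
    have fxy : eVariationOn f (Icc x y) ≠ ⊤ := hfin _ (Icc_subset_Icc hax hyb)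
    have fyb : eVariationOn f (Icc y b) ≠ ⊤ := hfin _ (Icc_subset_Icc hay le_rfl)
    have gax : eVariationOn g (Icc a x) ≠ ⊤ := gfin _ (Icc_subset_Icc le_rfl hxb)
    have gxc : eVariationOn g (Icc x c) ≠ ⊤ := gfin _ (Icc_subset_Icc hax hcb)
    have gcy : eVariationOn g (Icc c y) ≠ ⊤ := gfin _ (Icc_subset_Icc hac hyb)
    have gyb : eVariationOn g (Icc y b) ≠ ⊤ := gfin _ (Icc_subset_Icc hay le_rfl)
    -- split totalVar f
    have sf : totalVar a b f = (eVariationOn f (Icc a x)).toReal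
        + (eVariationOn f (Icc x y)).toReal + (eVariationOn f (Icc y b)).toReal := by
      unfold totalVar
      rw [← icc_split f hay hyb, ← icc_split f hax hxy,
        ENNReal.toReal_add (ENNReal.add_ne_top.2 ⟨fax, fxy⟩) fyb,
        ENNReal.toReal_add fax fxy]
    -- split totalVar g
    have sg : totalVar a b g = (eVariationOn g (Icc a x)).toReal
        + (eVariationOn g (Icc x c)).toReal + (eVariationOn g (Icc c y)).toReal
        + (eVariationOn g (Icc y b)).toReal := by
      unfold totalVar
      rw [← icc_split g hay hyb, ← icc_split g hac hcy.le, ← icc_split g hax hxc.le,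
        ENNReal.toReal_add (ENNReal.add_ne_top.2
          ⟨ENNReal.add_ne_top.2 ⟨gax, gxc⟩, gcy⟩) gyb,
        ENNReal.toReal_add (ENNReal.add_ne_top.2 ⟨gax, gxc⟩) gcy,
        ENNReal.toReal_add gax gxc]
    -- values of g
    have hgc : g c = f c + t := by simp [hgdef, hhdef]
    have hgx : g x = f x := by simp [hgdef, hhdef, ne_of_lt hxc]
    have hgy : g y = f y := by simp [hgdef, hhdef, ne_of_gt hcy]
    -- lower bounds on middle pieces of g
    have dxc : |f c + t - f x| ≤ (eVariationOn g (Icc x c)).toReal := by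
      have := (hgBV.mono (Icc_subset_Icc hax hcb)).dist_le
        (right_mem_Icc.2 hxc.le) (left_mem_Icc.2 hxc.le)
      rwa [hgc, hgx, Real.dist_eq] at this
    have dcy : |f y - f c - t| ≤ (eVariationOn g (Icc c y)).toReal := by
      have := (hgBV.mono (Icc_subset_Icc hac hyb)).dist_le
        (right_mem_Icc.2 hcy.le) (left_mem_Icc.2 hcy.le)
      rwa [hgc, hgy, Real.dist_eq, show f y - (f c + t) = f y - f c - t by ring] at this
    -- bounds on oscillation of f near c
    have fxc_le : (eVariationOn f (Icc x c)).toReal ≤ (eVariationOn f (Icc x y)).toReal :=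
      ENNReal.toReal_mono (hfin _ (Icc_subset_Icc hax hyb))
        (eVariationOn.mono f (Icc_subset_Icc le_rfl hcy.le))
    have fcy_le : (eVariationOn f (Icc c y)).toReal ≤ (eVariationOn f (Icc x y)).toReal :=
      ENNReal.toReal_mono (hfin _ (Icc_subset_Icc hax hyb))
        (eVariationOn.mono f (Icc_subset_Icc hxc.le le_rfl))
    have dfx : |f c - f x| ≤ (eVariationOn f (Icc x c)).toReal := by
      have := (hf.mono (Icc_subset_Icc hax hcb)).dist_le
        (right_mem_Icc.2 hxc.le) (left_mem_Icc.2 hxc.le)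
      rwa [Real.dist_eq] at this
    have dfy : |f y - f c| ≤ (eVariationOn f (Icc c y)).toReal := by
      have := (hf.mono (Icc_subset_Icc hac hyb)).dist_le
        (right_mem_Icc.2 hcy.le) (left_mem_Icc.2 hcy.le)
      rwa [Real.dist_eq] at this
    have tri1 : |t| ≤ |f c + t - f x| + |f c - f x| := by
      have he : (f c + t - f x) - (f c - f x) = t := by ring
      calc |t| = |(f c + t - f x) - (f c - f x)| := by rw [he]
        _ ≤ |f c + t - f x| + |f c - f x| := abs_sub _ _
    have tri2 : |t| ≤ |f y - f c - t| + |f y - f c| := by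
      have he : (f y - f c) - (f y - f c - t) = t := by ring
      have := abs_sub (f y - f c) (f y - f c - t)
      rw [he] at this
      linarith
    linarith
  -- conclusion
  have htend := hu h ha0 hBVh
  have hR : Tendsto (fun t : ℝ => (totalVar a b (f + t • h) - totalVar a b f) / t)
      (𝓝[>] (0 : ℝ)) (𝓝 (u h)) :=
    htend.mono_left (nhdsWithin_mono 0 fun z hz => ne_of_gt hz)
  have hL : Tendsto (fun t : ℝ => (totalVar a b (f + t • h) - totalVar a b f) / t)
      (𝓝[<] (0 : ℝ)) (𝓝 (u h)) :=
    htend.mono_left (nhdsWithin_mono 0 fun z hz => ne_of_lt hz)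
  have h2 : (2 : ℝ) ≤ u h := by
    refine ge_of_tendsto hR (eventually_nhdsWithin_of_forall fun t ht => ?_)
    have ht' : (0 : ℝ) < t := ht
    rw [le_div_iff₀ ht']
    have := main t
    rw [abs_of_pos ht'] at this
    linarith
  have h3 : u h ≤ -2 := by
    refine le_of_tendsto hL (eventually_nhdsWithin_of_forall fun t ht => ?_)
    have ht' : t < (0 : ℝ) := ht
    rw [div_le_iff_of_neg ht']
    have := main t
    rw [abs_of_neg ht'] at this
    linarith
  linarith
end
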